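/- Fix real numbers M and β with (7+β) ≠ 0, (5+β) ≠ 0 and (−4M+β+1) ≠ 0. Define the polynomial P̃₃(x) = x³ − (4(−2M+1+β)/((7+β)(−4M+β+1))) x² − (4/(7+β)) x + 8(1+β)/((7+β)(5+β)(−4M+β+1)) and the number λ̃₃ = (3+β)(5+β)(32M−8−8β). Then for every real x ≠ 0, (L₀ P̃₃)(x) = λ̃₃ · P̃₃(x). -/

import Mathlib

set_option maxHeartbeats 4000000

lemma d1 (A B C : ℝ) :
    deriv (fun t : ℝ => t ^ 3 - A * t ^ 2 - B * t + C) =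
    fun t => 3 * t ^ 2 - A * (2 * t) - B := by
  funext t
  have h : HasDerivAt (fun t : ℝ => t ^ 3 - A * t ^ 2 - B * t + C)
      (3 * t ^ 2 - A * (2 * t) - B) t := by
    have := (((hasDerivAt_pow 3 t).sub ((hasDerivAt_pow 2 t).const_mul A)).sub
      ((hasDerivAt_id t).const_mul B)).add_const C
    simpa using this
  exact h.deriv

lemma d2 (A B C : ℝ) :
    deriv (deriv (fun t : ℝ => t ^ 3 - A * t ^ 2 - B * t + C)) =
    fun t => 6 * t - A * 2 := by
  rw [d1]
  funext t
  have h : HasDerivAt (fun t : ℝ => 3 * t ^ 2 - A * (2 * t) - B)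
      (6 * t - A * 2) t := by
    have := (((hasDerivAt_pow 2 t).const_mul 3).sub
      (((hasDerivAt_id t).const_mul 2).const_mul A)).sub_const B
    exact this.congr_deriv (by push_cast; ring)
  exact h.deriv

lemma d3 (A B C : ℝ) :
    deriv (deriv (deriv (fun t : ℝ => t ^ 3 - A * t ^ 2 - B * t + C))) =
    fun _ => 6 := by
  rw [d2]
  funext t
  have h : HasDerivAt (fun t : ℝ => 6 * t - A * 2) 6 t := by
    simpa using ((hasDerivAt_id t).const_mul 6).sub_const (A * 2)
  exact h.deriv

/-- The third-order differential-difference operator `L₀` of Dunkl type with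
parameters `M, β`, acting on functions on `ℝ∖{0}`.  With `g(x) := f(−x)`, so that
`g'(x) = −f'(−x)`, `g''(x) = f''(−x)`, `g'''(x) = −f'''(−x)`, it reads
`(L₀f)(x) = (−8M+8Mx+8Mx²−8Mx³)g'''(x)
 + [−12M/x+24M+4βM+(36M+8βM)x−(12βM+48M)x²]g''(x)
 + (12Mx+4βMx²−12M/x−4βM)f''(x)
 + [(24M+16βM−8β²−32β−24)+24M/x²+(4β−12)M/x+(8β²−36βM−48M−4β²M+32β+24)x]g'(x)
 + [(4β²M+12βM)x−(12+4β)M/x+24M+8βM]f'(x)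
 + [12M/x³+4βM/x²+(12+4β²+4βM+16β)/x+(8βM+4β²M−44β−24−4β³−24β²)](f(x)−f(−x))`. -/
noncomputable def L0 (M β : ℝ) (f : ℝ → ℝ) (x : ℝ) : ℝ :=
  (-8 * M + 8 * M * x + 8 * M * x ^ 2 - 8 * M * x ^ 3) * (-(deriv^[3] f (-x))) +
    (-12 * M / x + 24 * M + 4 * β * M + (36 * M + 8 * β * M) * x -
        (12 * β * M + 48 * M) * x ^ 2) * (deriv^[2] f (-x)) +
    (12 * M * x + 4 * β * M * x ^ 2 - 12 * M / x - 4 * β * M) * (deriv^[2] f x) +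
    ((24 * M + 16 * β * M - 8 * β ^ 2 - 32 * β - 24) + 24 * M / x ^ 2 +
        (4 * β - 12) * M / x +
        (8 * β ^ 2 - 36 * β * M - 48 * M - 4 * β ^ 2 * M + 32 * β + 24) * x) *
      (-(deriv f (-x))) +
    ((4 * β ^ 2 * M + 12 * β * M) * x - (12 + 4 * β) * M / x + 24 * M + 8 * β * M) *
      (deriv f x) +
    (12 * M / x ^ 3 + 4 * β * M / x ^ 2 +
        (12 + 4 * β ^ 2 + 4 * β * M + 16 * β) / x +
        (8 * β * M + 4 * β ^ 2 * M - 44 * β - 24 - 4 * β ^ 3 - 24 * β ^ 2)) *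
      (f x - f (-x))


/-- The degree-3 monic −1 Krall-Jacobi polynomial
`P̃₃(x) = x³ − (4(−2M+1+β)/((7+β)(−4M+β+1)))x² − (4/(7+β))x
 + 8(1+β)/((7+β)(5+β)(−4M+β+1))`
is an eigenfunction of `L₀` with eigenvalue `λ̃₃ = (3+β)(5+β)(32M−8−8β)`. -/
theorem L0_eigen_degree_three (M β : ℝ) (h1 : 7 + β ≠ 0) (h2 : 5 + β ≠ 0)
    (h3 : -4 * M + β + 1 ≠ 0) (x : ℝ) (hx : x ≠ 0) :
    L0 M β (fun t => t ^ 3 - 4 * (-2 * M + 1 + β) / ((7 + β) * (-4 * M + β + 1)) * t ^ 2 -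
        4 / (7 + β) * t + 8 * (1 + β) / ((7 + β) * (5 + β) * (-4 * M + β + 1))) x =
      (3 + β) * (5 + β) * (32 * M - 8 - 8 * β) *
        (x ^ 3 - 4 * (-2 * M + 1 + β) / ((7 + β) * (-4 * M + β + 1)) * x ^ 2 -
          4 / (7 + β) * x + 8 * (1 + β) / ((7 + β) * (5 + β) * (-4 * M + β + 1))) := by
  simp only [L0, show (3:ℕ) = 2 + 1 from rfl, show (2:ℕ) = 1 + 1 from rfl,
    Function.iterate_succ, Function.iterate_one, Function.comp_apply,
    Function.iterate_zero, id_eq]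
  rw [d3, d2, d1]
  simp only []
  set D1 := 7 + β with hD1
  set D2 := 5 + β with hD2
  set D3 := -4 * M + β + 1 with hD3
  have h1' : D1 ≠ 0 := h1
  have h2' : D2 ≠ 0 := h2
  have h3' : D3 ≠ 0 := h3
  field_simp
  rw [hD1, hD2, hD3]
  ring
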